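/- Suppose N = 3, the three vertices (x_1, y_1), (x_2, y_2), (x_3, y_3) are not collinear (equivalently the signed area A ≠ 0), h > 0, and (x_K, y_K) is the vertex centroid ((x_1+x_2+x_3)/3, (y_1+y_2+y_3)/3). Then the 3×3 matrix D is invertible and Π = D·Π* equals the 3×3 identity matrix; consequently the stabilization term τ·(I − Π)ᵀ·(I − Π) vanishes and the first-order VEM element stiffness matrix reduces to its consistency part, K = Π*ᵀ·G̃·Π*, for every τ ∈ ℝ. (On triangles the VEM stiffness matrix needs no stabilization, consistent with the consistency matrix having full rank 2 on the complement of constants only for triangles.) -/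

import Mathlib

open Matrix Real Filter

noncomputable section

/-- The boundary-integral vectors `a_i = (1/2)·(y_{i+1} − y_{i−1}, x_{i−1} − x_{i+1})`
of a planar polygon with cyclically indexed vertex coordinates. -/
def aVec (N : ℕ) (x y : ZMod N → ℝ) (i : ZMod N) : Fin 2 → ℝ :=
  ![(y (i + 1) - y (i - 1)) / 2, (x (i - 1) - x (i + 1)) / 2]

/-- The signed (shoelace) area `A = (1/2)·Σ_i (x_i y_{i+1} − x_{i+1} y_i)`. -/
def shoelace (N : ℕ) [NeZero N] (x y : ZMod N → ℝ) : ℝ :=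
  (1 / 2) * ∑ i : ZMod N, (x i * y (i + 1) - x (i + 1) * y i)

/-- The `3×N` matrix `B` of the first-order VEM. -/
def Bmat (N : ℕ) (x y : ZMod N → ℝ) (h : ℝ) : Matrix (Fin 3) (ZMod N) ℝ :=
  Matrix.of fun α i => ![(1 : ℝ) / N, aVec N x y i 0 / h, aVec N x y i 1 / h] α

/-- The `N×3` matrix `D` of the first-order VEM, `D_{iα} = m_α(x_i, y_i)` with scaled
monomials `m₁ = 1`, `m₂ = (x − x_K)/h`, `m₃ = (y − y_K)/h`. -/
def Dmat (N : ℕ) (x y : ZMod N → ℝ) (h xK yK : ℝ) : Matrix (ZMod N) (Fin 3) ℝ :=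
  Matrix.of fun i α => ![(1 : ℝ), (x i - xK) / h, (y i - yK) / h] α

/-- `G = diag(1, A/h², A/h²)`. -/
def Gmat (N : ℕ) [NeZero N] (x y : ZMod N → ℝ) (h : ℝ) : Matrix (Fin 3) (Fin 3) ℝ :=
  Matrix.diagonal ![1, shoelace N x y / h ^ 2, shoelace N x y / h ^ 2]

/-- `G̃ = diag(0, A/h², A/h²)`. -/
def Gtil (N : ℕ) [NeZero N] (x y : ZMod N → ℝ) (h : ℝ) : Matrix (Fin 3) (Fin 3) ℝ :=
  Matrix.diagonal ![0, shoelace N x y / h ^ 2, shoelace N x y / h ^ 2]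

/-- `Π* = G⁻¹·B`. -/
def PiStar (N : ℕ) [NeZero N] (x y : ZMod N → ℝ) (h : ℝ) : Matrix (Fin 3) (ZMod N) ℝ :=
  (Gmat N x y h)⁻¹ * Bmat N x y h

/-- `Π = D·Π*`. -/
def PiMat (N : ℕ) [NeZero N] (x y : ZMod N → ℝ) (h xK yK : ℝ) :
    Matrix (ZMod N) (ZMod N) ℝ :=
  Dmat N x y h xK yK * PiStar N x y h

/-- The consistency part `K^consis = Π*ᵀ·G̃·Π*` of the VEM element stiffness matrix. -/
def Kconsis (N : ℕ) [NeZero N] (x y : ZMod N → ℝ) (h : ℝ) :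
    Matrix (ZMod N) (ZMod N) ℝ :=
  (PiStar N x y h)ᵀ * Gtil N x y h * PiStar N x y h

/-- The first-order VEM element stiffness matrix
`K = Π*ᵀ·G̃·Π* + τ·(I − Π)ᵀ·(I − Π)`. -/
def Kmat (N : ℕ) [NeZero N] (x y : ZMod N → ℝ) (h τ xK yK : ℝ) :
    Matrix (ZMod N) (ZMod N) ℝ :=
  Kconsis N x y h +
    τ • ((1 - PiMat N x y h xK yK)ᵀ * (1 - PiMat N x y h xK yK))

set_option maxHeartbeats 1000000

lemma zsum3 (f : ZMod 3 → ℝ) : ∑ i : ZMod 3, f i = f 0 + f 1 + f 2 := Fin.sum_univ_three f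

lemma zcases (i : ZMod 3) : i = 0 ∨ i = 1 ∨ i = 2 := by revert i; decide

def Pst (x y : ZMod 3 → ℝ) (h : ℝ) : Matrix (Fin 3) (ZMod 3) ℝ :=
  Matrix.of fun α i => ![(1 : ℝ)/3, h * aVec 3 x y i 0 / shoelace 3 x y,
    h * aVec 3 x y i 1 / shoelace 3 x y] α

lemma hS (x y : ZMod 3 → ℝ) : shoelace 3 x y = (1/2) * ((x 0 * y 1 - x 1 * y 0)
    + (x 1 * y 2 - x 2 * y 1) + (x 2 * y 0 - x 0 * y 2)) := by
  rw [shoelace, zsum3]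
  simp [show (0:ZMod 3)+1 = 1 from by decide, show (1:ZMod 3)+1 = 2 from by decide,
    show (2:ZMod 3)+1 = 0 from by decide]

lemma key (x y : ZMod 3 → ℝ) (h xK yK : ℝ) (hh' : h ≠ 0) (hA : shoelace 3 x y ≠ 0)
    (hxK : xK = (∑ i : ZMod 3, x i) / 3) (hyK : yK = (∑ i : ZMod 3, y i) / 3)
    (i j : ZMod 3) :
    (1:ℝ)/3 + (x i - xK)/h * (h * aVec 3 x y j 0 / shoelace 3 x y)
      + (y i - yK)/h * (h * aVec 3 x y j 1 / shoelace 3 x y)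
      = if i = j then 1 else 0 := by
  have h2 := hS x y
  rcases zcases i with rfl|rfl|rfl <;> rcases zcases j with rfl|rfl|rfl <;>
    simp +decide only [aVec, hxK, hyK, zsum3, Matrix.cons_val_zero, Matrix.cons_val_one,
      Matrix.head_cons, if_true, if_false,
      show (0:ZMod 3)-1 = 2 from by decide, show (0:ZMod 3)+1 = 1 from by decide,
      show (1:ZMod 3)+1 = 2 from by decide, show (2:ZMod 3)+1 = 0 from by decide,
      show (1:ZMod 3)-1 = 0 from by decide, show (2:ZMod 3)-1 = 1 from by decide] <;>
    (field_simp; rw [h2]; ring)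

lemma hGP (x y : ZMod 3 → ℝ) (h : ℝ) (hh' : h ≠ 0) (hA : shoelace 3 x y ≠ 0) :
    Gmat 3 x y h * Pst x y h = Bmat 3 x y h := by
  ext α i
  fin_cases α <;>
    simp +decide [Gmat, Pst, Bmat, Matrix.mul_apply, Fin.sum_univ_three,
      Matrix.diagonal_apply] <;> (field_simp; try ring)

lemma hPst (x y : ZMod 3 → ℝ) (h : ℝ) (hh' : h ≠ 0) (hA : shoelace 3 x y ≠ 0) :
    PiStar 3 x y h = Pst x y h := by
  have hdet : IsUnit (Gmat 3 x y h).det := by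
    rw [Gmat, Matrix.det_diagonal, Fin.prod_univ_three]
    simp only [Matrix.cons_val_zero, Matrix.cons_val_one, Matrix.head_cons,
      Matrix.cons_val_two, Matrix.tail_cons, isUnit_iff_ne_zero]
    have : shoelace 3 x y / h ^ 2 ≠ 0 := div_ne_zero hA (pow_ne_zero 2 hh')
    simp [this]
  rw [PiStar, ← hGP x y h hh' hA, ← Matrix.mul_assoc, Matrix.nonsing_inv_mul _ hdet, Matrix.one_mul]

lemma hPD (x y : ZMod 3 → ℝ) (h xK yK : ℝ) (hh' : h ≠ 0) (hA : shoelace 3 x y ≠ 0)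
    (hxK : xK = (∑ i : ZMod 3, x i) / 3) (hyK : yK = (∑ i : ZMod 3, y i) / 3) :
    Pst x y h * Dmat 3 x y h xK yK = (1 : Matrix (Fin 3) (Fin 3) ℝ) := by
  have h2 := hS x y
  ext α β
  fin_cases α <;> fin_cases β <;>
    simp +decide only [Pst, Dmat, aVec, Matrix.mul_apply, zsum3, Matrix.of_apply,
      Fin.isValue, Fin.zero_eta, Fin.mk_one, show (⟨2, by decide⟩ : Fin 3) = 2 from rfl,
      Matrix.cons_val_zero, Matrix.cons_val_one, Matrix.head_cons, Matrix.cons_val_two,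
      Matrix.tail_cons, Matrix.one_apply, if_true, if_false, hxK, hyK,
      show (0:ZMod 3)-1 = 2 from by decide, show (0:ZMod 3)+1 = 1 from by decide,
      show (1:ZMod 3)+1 = 2 from by decide, show (2:ZMod 3)+1 = 0 from by decide,
      show (1:ZMod 3)-1 = 0 from by decide, show (2:ZMod 3)-1 = 1 from by decide] <;>
    (field_simp; try rw [h2]) <;> ring

lemma hDP (x y : ZMod 3 → ℝ) (h xK yK : ℝ) (hh' : h ≠ 0) (hA : shoelace 3 x y ≠ 0)
    (hxK : xK = (∑ i : ZMod 3, x i) / 3) (hyK : yK = (∑ i : ZMod 3, y i) / 3) :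
    Dmat 3 x y h xK yK * Pst x y h = (1 : Matrix (ZMod 3) (ZMod 3) ℝ) := by
  ext i j
  have k := key x y h xK yK hh' hA hxK hyK i j
  simp only [Dmat, Pst, Matrix.mul_apply, Fin.sum_univ_three, Matrix.of_apply,
    Matrix.cons_val_zero, Matrix.cons_val_one, Matrix.head_cons, Matrix.cons_val_two,
    Matrix.tail_cons, Matrix.one_apply]
  rw [← k]; ring

/-- On a (noncollinear) triangle with `(x_K, y_K)` the vertex centroid, `D` is invertible
and `Π = I`, so the stabilization term vanishes and the first-order VEM element stiffness
matrix reduces to its consistency part, for every `τ`. -/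
theorem stmt19 (x y : ZMod 3 → ℝ) (h τ xK yK : ℝ) (hh : 0 < h)
    (hA : shoelace 3 x y ≠ 0)
    (hxK : xK = (∑ i : ZMod 3, x i) / 3) (hyK : yK = (∑ i : ZMod 3, y i) / 3) :
    (∃ E : Matrix (Fin 3) (ZMod 3) ℝ,
      Dmat 3 x y h xK yK * E = (1 : Matrix (ZMod 3) (ZMod 3) ℝ) ∧
      E * Dmat 3 x y h xK yK = (1 : Matrix (Fin 3) (Fin 3) ℝ)) ∧
    PiMat 3 x y h xK yK = 1 ∧
    τ • ((1 - PiMat 3 x y h xK yK)ᵀ * (1 - PiMat 3 x y h xK yK)) = 0 ∧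
    Kmat 3 x y h τ xK yK = Kconsis 3 x y h := by
  have hh' : h ≠ 0 := ne_of_gt hh
  have hP : PiMat 3 x y h xK yK = 1 := by
    rw [PiMat, hPst x y h hh' hA]
    exact hDP x y h xK yK hh' hA hxK hyK
  refine ⟨⟨Pst x y h, hDP x y h xK yK hh' hA hxK hyK, hPD x y h xK yK hh' hA hxK hyK⟩,
    hP, ?_, ?_⟩
  · rw [hP]; simp
  · rw [Kmat, hP]; simp

end
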